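/- Let G be a finite abelian group generated by two commuting elements σ and τ with ord(σ) = d and ord(τ) = ℓ. Then there exist o dividing gcd(d, ℓ) and an integer a with gcd(a, ℓ) = 1 such that G is isomorphic to the group ⟨σ, τ | σ^d = τ^ℓ = σ^{d/o} τ^{-aℓ/o} = 1⟩; equivalently, every relation group of this form arises with (s, r) = (d/o, aℓ/o). -/

import Mathlib

/-- Lift a residue coprime to `o` to a natural number coprime to `ℓ`, where `o ∣ ℓ`. -/
lemma exists_coprime_lift {o ℓ a' : ℕ} (hℓ : 0 < ℓ) (ho : o ∣ ℓ) (h : Nat.Coprime a' o) :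
    ∃ a : ℕ, Nat.Coprime a ℓ ∧ a ≡ a' [MOD o] := by
  haveI : NeZero ℓ := ⟨hℓ.ne'⟩
  obtain ⟨u, hu⟩ := ZMod.unitsMap_surjective ho (ZMod.unitOfCoprime a' h)
  refine ⟨(u : ZMod ℓ).val, ZMod.val_coe_unit_coprime u, ?_⟩
  rw [← ZMod.natCast_eq_natCast_iff]
  have h1 : (((u : ZMod ℓ).val : ℕ) : ZMod o) = ZMod.cast (u : ZMod ℓ) :=
    ZMod.natCast_val _
  have h2 : (ZMod.unitsMap ho u : ZMod o) = ZMod.cast (u : ZMod ℓ) := by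
    rw [ZMod.unitsMap_def]; rfl
  rw [h1, ← h2, hu, ZMod.coe_unitOfCoprime]

/-- Classification of finite abelian groups generated by two elements of orders `d` and `ℓ`:
there are `o ∣ gcd(d, ℓ)` and `a` coprime to `ℓ` so that the single extra relation is
`σ^(d/o) = τ^(aℓ/o)`, and the resulting group has order `dℓ/o`. -/
theorem stmt_2 {G : Type*} [CommGroup G] [Fintype G] (σ τ : G) {d ℓ : ℕ}
    (hd : 0 < d) (hℓ : 0 < ℓ) (hσ : orderOf σ = d) (hτ : orderOf τ = ℓ)
    (hgen : Subgroup.closure ({σ, τ} : Set G) = ⊤) :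
    ∃ o a : ℕ, o ∣ Nat.gcd d ℓ ∧ Nat.Coprime a ℓ ∧
      σ ^ (d / o) = τ ^ (a * (ℓ / o)) ∧ Fintype.card G = d * ℓ / o := by
  classical
  set B := Subgroup.zpowers τ with hBdef
  let π : G →* G ⧸ B := QuotientGroup.mk' B
  set σ' : G ⧸ B := π σ with hσ'def
  have hσ'd : σ' ^ d = 1 := by
    rw [hσ'def, ← map_pow, ← hσ, pow_orderOf_eq_one, map_one]
  set n := orderOf σ' with hn
  have hnd : n ∣ d := orderOf_dvd_of_pow_eq_one hσ'd
  have hmem : σ ^ n ∈ B := by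
    have h1 : π (σ ^ n) = 1 := by rw [map_pow, ← hσ'def, pow_orderOf_eq_one]
    rwa [← QuotientGroup.eq_one_iff]
  obtain ⟨k, hk⟩ := Subgroup.mem_zpowers_iff.mp hmem
  -- replace the integer exponent by a natural one
  set k₀ : ℕ := (k % (ℓ : ℤ)).toNat with hk₀def
  have hk₀ : τ ^ k₀ = σ ^ n := by
    have hnn : (0 : ℤ) ≤ k % (ℓ : ℤ) :=
      Int.emod_nonneg k (by exact_mod_cast hℓ.ne')
    have : τ ^ ((k₀ : ℤ)) = τ ^ k := by
      rw [hk₀def, Int.toNat_of_nonneg hnn, ← hτ, zpow_mod_orderOf]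
    rw [← hk, ← this, zpow_natCast]
  set o := d / n with ho
  have hnpos : 0 < n := orderOf_pos σ'
  have hod : o ∣ d := ⟨n, (Nat.div_mul_cancel hnd).symm⟩
  have hdo : d / o = n := Nat.div_div_self hnd hd.ne'
  have hordσn : orderOf (σ ^ n) = o := by
    rw [orderOf_pow, hσ, Nat.gcd_eq_right hnd]
  have hordτk : ℓ / Nat.gcd ℓ k₀ = o := by
    rw [← hτ, ← orderOf_pow, hk₀, hordσn]
  set g := Nat.gcd ℓ k₀ with hg
  have hgl : g ∣ ℓ := Nat.gcd_dvd_left _ _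
  have hgpos : 0 < g := Nat.gcd_pos_of_pos_left _ hℓ
  have hol : o ∣ ℓ := hordτk ▸ ⟨g, (Nat.div_mul_cancel hgl).symm⟩
  have hlo : ℓ / o = g := by rw [← hordτk, Nat.div_div_self hgl hℓ.ne']
  have hog : o * g = ℓ := by rw [← hordτk, Nat.div_mul_cancel hgl]
  obtain ⟨a', ha'⟩ : g ∣ k₀ := Nat.gcd_dvd_right _ _
  have hcop : Nat.Coprime a' o := by
    have h1 : Nat.gcd (g * o) (g * a') = g * Nat.gcd o a' := Nat.gcd_mul_left g o a'
    have h2 : g * Nat.gcd o a' = g * 1 := by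
      rw [← h1, mul_comm g o, hog, ← ha', ← hg, mul_one]
    exact Nat.coprime_comm.mp (Nat.eq_of_mul_eq_mul_left hgpos h2)
  obtain ⟨a, hacop, hamod⟩ := exists_coprime_lift hℓ hol hcop
  refine ⟨o, a, Nat.dvd_gcd hod hol, hacop, ?_, ?_⟩
  · rw [hdo, hlo, ← hk₀, ha']
    rw [pow_eq_pow_iff_modEq, hτ, ← hog, mul_comm g a']
    exact (hamod.mul_right' g).symm
  · -- cardinality
    have hzt : Subgroup.zpowers σ' = ⊤ := by
      have htop : Subgroup.map π ⊤ = ⊤ :=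
        Subgroup.map_top_of_surjective _ (QuotientGroup.mk'_surjective B)
      rw [← hgen, MonoidHom.map_closure] at htop
      have himg : π '' ({σ, τ} : Set G) = {σ', π τ} := by
        simp [Set.image_pair, hσ'def]
      rw [himg] at htop
      have hπτ : π τ = 1 := by
        rw [QuotientGroup.mk'_apply, QuotientGroup.eq_one_iff]
        exact Subgroup.mem_zpowers τ
      refine le_antisymm le_top ?_
      rw [← htop]
      refine (Subgroup.closure_le _).mpr ?_
      intro x hx
      rcases hx with h | h
      · rw [h]; exact Subgroup.mem_zpowers σ'
      · rw [Set.mem_singleton_iff.mp h, hπτ]; exact Subgroup.one_mem _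
    have hq : Nat.card (G ⧸ B) = n := by
      rw [← Subgroup.card_top (G := G ⧸ B), ← hzt, Nat.card_zpowers]
    have hBcard : Nat.card B = ℓ := by rw [hBdef, Nat.card_zpowers, hτ]
    have hcard := Subgroup.card_eq_card_quotient_mul_card_subgroup B
    rw [hq, hBcard] at hcard
    rw [← Nat.card_eq_fintype_card, hcard, mul_comm d ℓ, Nat.mul_div_assoc ℓ hod, hdo,
      mul_comm]
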